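/- On the Cartesian torus grid, let W_{ij} ∈ L¹(T^d) (i,j = 1,…,n), let 1 ≤ q < ∞, let u_j : G → ℝ, and let p_i be the fully implicit discrete potential p_i(K) = ∑_{j=1}^n ∑_{J∈G} m(J)·W^{ij}_{KJ}·u_j(J). Then ‖p_i‖_{0,q,T} ≤ ∑_{j=1}^n ‖W_{ij}‖_{L¹(T^d)}·‖u_j‖_{0,q,T}, and moreover for every direction ℓ ∈ {1,…,d}: (∑_{K∈G} m(K)·|p_i(K+e_ℓ) − p_i(K)|^q)^{1/q} ≤ ∑_{j=1}^n ‖W_{ij}‖_{L¹(T^d)}·(∑_{K∈G} m(K)·|u_j(K+e_ℓ) − u_j(K)|^q)^{1/q}. -/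

import Mathlib

open MeasureTheory Real Finset

namespace SG

instance : Fact ((0:ℝ) < 1) := ⟨one_pos⟩

variable {d : ℕ}

/-- Cells of the Cartesian torus grid. -/
abbrev Cell (M : Fin d → ℕ) := ∀ ℓ : Fin d, ZMod (M ℓ)

/-- Cell measure `m(K) = Δx₁⋯Δx_d`. -/
noncomputable def mK (M : Fin d → ℕ) : ℝ := ∏ ℓ, ((M ℓ : ℝ))⁻¹

/-- Transmissibility coefficient of an edge in direction `ℓ`:
`τ_σ = m(σ)/d_σ = m(K)·M_ℓ²`. -/
noncomputable def τ (M : Fin d → ℕ) (ℓ : Fin d) : ℝ := mK M * (M ℓ : ℝ) ^ 2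

/-- Shift a cell by `s` in direction `ℓ` (mod `M ℓ`). -/
def shift (M : Fin d → ℕ) (K : Cell M) (ℓ : Fin d) (s : ℤ) : Cell M :=
  Function.update K ℓ (K ℓ + (s : ZMod (M ℓ)))

/-- Hypothesis (H2): `B` is continuous on `[0,∞)` with `0 < B(s) ≤ 1` for `s ≥ 0`. -/
def H2 (B : ℝ → ℝ) : Prop :=
  ContinuousOn B (Set.Ici 0) ∧ ∀ s : ℝ, 0 ≤ s → 0 < B s ∧ B s ≤ 1

/-- Hypothesis (H3): `α ∈ [0,1)` and `B(s) ≥ 1 − α·s` for all `s ≥ 0`. -/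
def H3 (B : ℝ → ℝ) (α : ℝ) : Prop :=
  0 ≤ α ∧ α < 1 ∧ ∀ s : ℝ, 0 ≤ s → 1 - α * s ≤ B s

/-- The scaled weight function `B_κ(s) = κ·B(s/κ)`. -/
noncomputable def Bk (κ : ℝ) (B : ℝ → ℝ) (s : ℝ) : ℝ := κ * B (s / κ)

/-- Upwind value on the (oriented) edge from `K` to `L`. -/
noncomputable def upw {M : Fin d → ℕ} (u p : Cell M → ℝ) (K L : Cell M) : ℝ :=
  if 0 ≤ p L - p K then u L else u K

/-- Numerical flux `F_{K,σ}[u,p]` from `K` through the edge (in direction `ℓ`) to its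
neighbor `L`. -/
noncomputable def flux (M : Fin d → ℕ) (κ : ℝ) (B : ℝ → ℝ) (u p : Cell M → ℝ)
    (ℓ : Fin d) (K L : Cell M) : ℝ :=
  -(τ M ℓ) * (Bk κ B |p L - p K| * (u L - u K) + upw u p K L * (p L - p K))

/-- Sum of the numerical fluxes over the `2d` edges incident to `K`. -/
noncomputable def fluxSum (M : Fin d → ℕ) (κ : ℝ) (B : ℝ → ℝ) (u p : Cell M → ℝ)
    (K : Cell M) : ℝ :=
  ∑ ℓ : Fin d, (flux M κ B u p ℓ K (shift M K ℓ 1) + flux M κ B u p ℓ K (shift M K ℓ (-1)))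

/-- One implicit Euler finite-volume step with prescribed potential `p`. -/
def Step (M : Fin d → ℕ) (κ Δt : ℝ) (B : ℝ → ℝ) (uPrev u p : Cell M → ℝ) : Prop :=
  ∀ K : Cell M, mK M * (u K - uPrev K) / Δt + fluxSum M κ B u p K = 0

/-- Discrete Boltzmann entropy. -/
noncomputable def HB (M : Fin d → ℕ) [∀ ℓ, NeZero (M ℓ)] {n : ℕ}
    (u : Fin n → Cell M → ℝ) : ℝ :=
  ∑ i, ∑ K : Cell M, mK M * (u i K * (Real.log (u i K) - 1))

/-- Discrete Rao entropy associated to discrete kernels `Wd`. -/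
noncomputable def HR (M : Fin d → ℕ) [∀ ℓ, NeZero (M ℓ)] {n : ℕ}
    (Wd : Fin n → Fin n → Cell M → Cell M → ℝ) (u : Fin n → Cell M → ℝ) : ℝ :=
  (1/2) * ∑ i, ∑ j, ∑ K : Cell M, ∑ J : Cell M,
    mK M * mK M * Wd i j K J * u i K * u j J

/-- Boltzmann entropy production term `P_B`. -/
noncomputable def PB (M : Fin d → ℕ) [∀ ℓ, NeZero (M ℓ)] {n : ℕ} (κ : ℝ) (B : ℝ → ℝ)
    (u p : Fin n → Cell M → ℝ) : ℝ :=
  4 * ∑ i, ∑ K : Cell M, ∑ ℓ : Fin d,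
    τ M ℓ * Bk κ B |p i (shift M K ℓ 1) - p i K| *
      (Real.sqrt (u i (shift M K ℓ 1)) - Real.sqrt (u i K)) ^ 2

/-- Rao entropy production term `P_R`. -/
noncomputable def PR (M : Fin d → ℕ) [∀ ℓ, NeZero (M ℓ)] {n : ℕ}
    (u p : Fin n → Cell M → ℝ) : ℝ :=
  ∑ i, ∑ K : Cell M, ∑ ℓ : Fin d,
    τ M ℓ * upw (u i) (p i) K (shift M K ℓ 1) * (p i (shift M K ℓ 1) - p i K) ^ 2

/-- Cross term `X(u,p)`. -/
noncomputable def Xc (M : Fin d → ℕ) [∀ ℓ, NeZero (M ℓ)] {n : ℕ}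
    (u p : Fin n → Cell M → ℝ) : ℝ :=
  ∑ i, ∑ K : Cell M, ∑ ℓ : Fin d,
    τ M ℓ * (p i (shift M K ℓ 1) - p i K) * (u i (shift M K ℓ 1) - u i K)

/-- Discrete Fisher information `∑_i ∑_σ τ_σ |D_σ √u_i|²`. -/
noncomputable def Fisher (M : Fin d → ℕ) [∀ ℓ, NeZero (M ℓ)] {n : ℕ}
    (u : Fin n → Cell M → ℝ) : ℝ :=
  ∑ i, ∑ K : Cell M, ∑ ℓ : Fin d,
    τ M ℓ * (Real.sqrt (u i (shift M K ℓ 1)) - Real.sqrt (u i K)) ^ 2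

/-- The torus `T^d = (ℝ/ℤ)^d`. -/
abbrev Td (d : ℕ) := Fin d → AddCircle (1 : ℝ)

/-- The box `Q_K ⊆ T^d` corresponding to the cell `K`. -/
noncomputable def QK (M : Fin d → ℕ) (K : Cell M) : Set (Td d) :=
  Set.univ.pi fun ℓ => (fun t : ℝ => (t : AddCircle (1 : ℝ))) ''
    Set.Ico (((K ℓ).val : ℝ) / (M ℓ)) ((((K ℓ).val : ℝ) + 1) / (M ℓ))

/-- The discrete kernel `W_{KJ} = (m(K)m(J))⁻¹ ∫_{Q_K}∫_{Q_J} W(x−y) dy dx`. -/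
noncomputable def Wdisc (M : Fin d → ℕ) (W : Td d → ℝ) (K J : Cell M) : ℝ :=
  (mK M * mK M)⁻¹ * ∫ x in QK M K, ∫ y in QK M J, W (x - y)

/-- The discrete nonlocal potential `p_i(K) = ∑_j ∑_J m(J)·Wd^{ij}_{KJ}·u_j(J)`. -/
noncomputable def pot (M : Fin d → ℕ) [∀ ℓ, NeZero (M ℓ)] {n : ℕ}
    (Wd : Fin n → Fin n → Cell M → Cell M → ℝ) (u : Fin n → Cell M → ℝ)
    (i : Fin n) (K : Cell M) : ℝ :=
  ∑ j, ∑ J : Cell M, mK M * Wd i j K J * u j J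

/-- Discrete `L^q` norm of a cell function. -/
noncomputable def normq (M : Fin d → ℕ) [∀ ℓ, NeZero (M ℓ)] (q : ℝ)
    (u : Cell M → ℝ) : ℝ :=
  (∑ K : Cell M, mK M * |u K| ^ q) ^ (1/q)

/-- Discrete `L^q` norm of an edge function (dual-cell measure `m(Δ_σ) = m(σ)·d_σ = m(K)`). -/
noncomputable def enorm (M : Fin d → ℕ) [∀ ℓ, NeZero (M ℓ)] (q : ℝ)
    (w : Cell M → Fin d → ℝ) : ℝ :=
  (∑ K : Cell M, ∑ ℓ : Fin d, mK M * |w K ℓ| ^ q) ^ (1/q)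

/-- Magnitude of the discrete gradient on the edge `(K,ℓ)`:
`|∇^h_σ v| = d·D_σ v/d_σ`. -/
noncomputable def gradh (M : Fin d → ℕ) (v : Cell M → ℝ) (K : Cell M) (ℓ : Fin d) : ℝ :=
  d * (M ℓ : ℝ) * |v (shift M K ℓ 1) - v K|



/-! ### Auxiliary material for the proof -/

noncomputable section Aux

noncomputable def cmk (t : ℝ) : AddCircle (1:ℝ) := (t : AddCircle (1:ℝ))

lemma cmk_equivIco (x : AddCircle (1:ℝ)) : cmk ((AddCircle.equivIco 1 0) x : ℝ) = x :=
  (AddCircle.equivIco 1 0).symm_apply_apply x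

lemma mem_image_cmk {S : Set ℝ} (hS : S ⊆ Set.Ico 0 1) (x : AddCircle (1:ℝ)) :
    x ∈ cmk '' S ↔ ((AddCircle.equivIco 1 0) x : ℝ) ∈ S := by
  constructor
  · rintro ⟨s, hs, rfl⟩
    have h1 : ((AddCircle.equivIco 1 0) (cmk s) : ℝ) ∈ Set.Ico (0:ℝ) (0+1) :=
      ((AddCircle.equivIco 1 0) (cmk s)).2
    have h2 : s ∈ Set.Ico (0:ℝ) (0+1) := by simpa using hS hs
    have h3 : ((((AddCircle.equivIco 1 0) (cmk s)) : ℝ) : AddCircle (1:ℝ)) = ((s : ℝ) : AddCircle (1:ℝ)) :=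
      cmk_equivIco (cmk s)
    rw [AddCircle.coe_eq_coe_iff_of_mem_Ico h1 h2] at h3
    rwa [h3]
  · intro h
    exact ⟨_, h, cmk_equivIco x⟩

lemma image_cmk_eq_preimage {S : Set ℝ} (hS : S ⊆ Set.Ico 0 1) :
    cmk '' S = (AddCircle.measurableEquivIco 1 0) ⁻¹' (Subtype.val ⁻¹' S) := by
  ext x; exact mem_image_cmk hS x

lemma measurableSet_image_cmk {S : Set ℝ} (hS : S ⊆ Set.Ico 0 1) (hSm : MeasurableSet S) :
    MeasurableSet (cmk '' S) := by
  rw [image_cmk_eq_preimage hS]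
  exact (AddCircle.measurableEquivIco 1 0).measurable (measurable_subtype_coe hSm)

lemma disjoint_image_cmk {S T : Set ℝ} (hS : S ⊆ Set.Ico 0 1) (hT : T ⊆ Set.Ico 0 1)
    (h : Disjoint S T) : Disjoint (cmk '' S) (cmk '' T) := by
  rw [image_cmk_eq_preimage hS, image_cmk_eq_preimage hT]
  exact (h.preimage _).preimage _

lemma volume_image_cmk_le {S : Set ℝ} (hS : S ⊆ Set.Ico 0 1) (hSm : MeasurableSet S) :
    volume (cmk '' S) ≤ volume S := by
  have hmp := AddCircle.measurePreserving_mk 1 0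
  have hmeas := measurableSet_image_cmk hS hSm
  have h1 : volume (cmk '' S) = volume.restrict (Set.Ioc 0 (0+1)) (cmk ⁻¹' (cmk '' S)) :=
    (hmp.measure_preimage hmeas.nullMeasurableSet).symm
  rw [h1, Measure.restrict_apply' measurableSet_Ioc]
  have hsub : cmk ⁻¹' (cmk '' S) ∩ Set.Ioc 0 (0+1) ⊆ S ∪ {1} := by
    rintro t ⟨⟨s, hs, hst⟩, ht⟩
    rcases lt_or_ge t 1 with h | h
    · left
      have h2 : t ∈ Set.Ico (0:ℝ) (0+1) := by
        simp only [zero_add]; exact ⟨ht.1.le, h⟩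
      have h3 : s ∈ Set.Ico (0:ℝ) (0+1) := by simpa using hS hs
      have h4 : ((s : ℝ) : AddCircle (1:ℝ)) = ((t:ℝ) : AddCircle (1:ℝ)) := hst
      rw [AddCircle.coe_eq_coe_iff_of_mem_Ico h3 h2] at h4
      rwa [← h4]
    · right
      have : t ≤ 1 := by simpa using ht.2
      exact Set.mem_singleton_iff.2 (le_antisymm this h)
  calc volume (cmk ⁻¹' (cmk '' S) ∩ Set.Ioc 0 (0+1)) ≤ volume (S ∪ {1}) := measure_mono hsub
    _ ≤ volume S + volume ({1} : Set ℝ) := measure_union_le _ _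
    _ = volume S := by simp


instance : (volume : Measure (AddCircle (1:ℝ))).IsNegInvariant :=
  Measure.IsAddHaarMeasure.isNegInvariant_of_regular _
instance : IsProbabilityMeasure (volume : Measure (AddCircle (1:ℝ))) :=
  ⟨by simp [AddCircle.measure_univ (1:ℝ)]⟩

lemma weight_abs_rpow {q : ℝ} (hq : 1 ≤ q) {m : ℝ} (hm : 0 ≤ m) (x : ℝ) :
    m * |x| ^ q = |m ^ (1/q) * x| ^ q := by
  have hq0 : q ≠ 0 := by positivity
  rw [abs_mul, Real.mul_rpow (abs_nonneg _) (abs_nonneg _),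
    abs_of_nonneg (Real.rpow_nonneg hm _), ← Real.rpow_mul hm, one_div_mul_cancel hq0,
    Real.rpow_one]

/-- Weighted two-term Minkowski. -/
lemma minkowski2 {ι : Type*} [Fintype ι] (m : ι → ℝ) (hm : ∀ k, 0 ≤ m k)
    (g h : ι → ℝ) {q : ℝ} (hq : 1 ≤ q) :
    (∑ k, m k * |g k + h k| ^ q) ^ (1/q) ≤
      (∑ k, m k * |g k| ^ q) ^ (1/q) + (∑ k, m k * |h k| ^ q) ^ (1/q) := by
  have e : ∀ f : ι → ℝ, ∑ k, m k * |f k| ^ q = ∑ k, |m k ^ (1/q) * f k| ^ q := by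
    intro f
    exact Finset.sum_congr rfl fun k _ => weight_abs_rpow hq (hm k) (f k)
  rw [e (fun k => g k + h k), e g, e h]
  have := Real.Lp_add_le Finset.univ (fun k => m k ^ (1/q) * g k)
    (fun k => m k ^ (1/q) * h k) hq
  simpa [mul_add] using this

/-- Weighted Minkowski for finite sums of functions. -/
lemma minkowski_sum {ι κ : Type*} [Fintype ι] (m : ι → ℝ) (hm : ∀ k, 0 ≤ m k)
    (s : Finset κ) (f : κ → ι → ℝ) {q : ℝ} (hq : 1 ≤ q) :
    (∑ k, m k * |∑ j ∈ s, f j k| ^ q) ^ (1/q) ≤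
      ∑ j ∈ s, (∑ k, m k * |f j k| ^ q) ^ (1/q) := by
  have hq0 : q ≠ 0 := by positivity
  classical
  induction s using Finset.induction_on with
  | empty => simp [Real.zero_rpow hq0, Real.zero_rpow (inv_ne_zero hq0)]
  | insert j s hnot ih =>
    calc (∑ k, m k * |∑ i ∈ insert j s, f i k| ^ q) ^ (1/q)
        = (∑ k, m k * |f j k + ∑ i ∈ s, f i k| ^ q) ^ (1/q) := by
          simp [Finset.sum_insert hnot]
      _ ≤ (∑ k, m k * |f j k| ^ q) ^ (1/q) + (∑ k, m k * |∑ i ∈ s, f i k| ^ q) ^ (1/q) :=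
          minkowski2 m hm _ _ hq
      _ ≤ (∑ k, m k * |f j k| ^ q) ^ (1/q) + ∑ i ∈ s, (∑ k, m k * |f i k| ^ q) ^ (1/q) := by
          exact add_le_add_right ih _
      _ = ∑ i ∈ insert j s, (∑ k, m k * |f i k| ^ q) ^ (1/q) := by
          rw [Finset.sum_insert hnot]

/-- Discrete Schur/Young inequality with constant weights. -/
lemma young {ι : Type*} [Fintype ι] {m : ℝ} (hm : 0 < m) (a : ι → ι → ℝ) (v : ι → ℝ)
    {C : ℝ} (hC : 0 ≤ C)
    (hrow : ∀ k, ∑ j, m * |a k j| ≤ C) (hcol : ∀ j, ∑ k, m * |a k j| ≤ C)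
    {q : ℝ} (hq : 1 ≤ q) :
    (∑ k, m * |∑ j, m * a k j * v j| ^ q) ^ (1/q) ≤ C * (∑ k, m * |v k| ^ q) ^ (1/q) := by
  have hq0 : q ≠ 0 := by positivity
  have hq1 : (0:ℝ) ≤ q - 1 := by linarith
  set N := ∑ k, m * |v k| ^ q with hN
  have hN0 : 0 ≤ N := Finset.sum_nonneg fun k _ => by positivity
  have step1 : ∀ k : ι, |∑ j, m * a k j * v j| ^ q
      ≤ C ^ (q-1) * ∑ j, m * |a k j| * |v j| ^ q := by
    intro k
    have habs : |∑ j, m * a k j * v j| ≤ ∑ j, m * |a k j| * |v j| := by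
      refine (Finset.abs_sum_le_sum_abs _ _).trans (le_of_eq ?_)
      refine Finset.sum_congr rfl fun j _ => ?_
      rw [abs_mul, abs_mul, abs_of_nonneg hm.le]
    have h1 : |∑ j, m * a k j * v j| ^ q ≤ (∑ j, m * |a k j| * |v j|) ^ q :=
      Real.rpow_le_rpow (abs_nonneg _) habs (by linarith)
    set S := ∑ j, m * |a k j| with hS
    have hS0 : 0 ≤ S := Finset.sum_nonneg fun j _ => by positivity
    rcases eq_or_lt_of_le hS0 with hSz | hSp
    · have hz : ∀ j ∈ Finset.univ, m * |a k j| = 0 :=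
        (Finset.sum_eq_zero_iff_of_nonneg fun j _ => by positivity).1 hSz.symm
      have hzz : (∑ j, m * |a k j| * |v j|) = 0 :=
        Finset.sum_eq_zero fun j hj => by rw [hz j hj, zero_mul]
      rw [hzz, Real.zero_rpow hq0] at h1
      refine h1.trans ?_
      have : (0:ℝ) ≤ ∑ j, m * |a k j| * |v j| ^ q :=
        Finset.sum_nonneg fun j _ => by positivity
      positivity
    · have hsum0 : 0 ≤ ∑ j, m * |a k j| / S * |v j| :=
        Finset.sum_nonneg fun j _ => by positivity
      have hweights : ∑ j, m * |a k j| / S = 1 := by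
        rw [← Finset.sum_div, ← hS]; field_simp
      have hjensen := Real.rpow_arith_mean_le_arith_mean_rpow Finset.univ
        (fun j => m * |a k j| / S) (fun j => |v j|)
        (fun j _ => by positivity) hweights (fun j _ => abs_nonneg _) hq
      have hSq : S ^ q / S = S ^ (q-1) := by
        rw [Real.rpow_sub hSp, Real.rpow_one]
      calc |∑ j, m * a k j * v j| ^ q ≤ (∑ j, m * |a k j| * |v j|) ^ q := h1
        _ = (S * ∑ j, m * |a k j| / S * |v j|) ^ q := by
            congr 1
            rw [Finset.mul_sum]
            refine Finset.sum_congr rfl fun j _ => ?_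
            field_simp
        _ = S ^ q * (∑ j, m * |a k j| / S * |v j|) ^ q :=
            Real.mul_rpow hS0 hsum0
        _ ≤ S ^ q * ∑ j, m * |a k j| / S * |v j| ^ q :=
            mul_le_mul_of_nonneg_left hjensen (Real.rpow_nonneg hS0 _)
        _ = S ^ (q-1) * ∑ j, m * |a k j| * |v j| ^ q := by
            rw [Finset.mul_sum, Finset.mul_sum]
            refine Finset.sum_congr rfl fun j _ => ?_
            rw [← hSq]
            field_simp
            try ring
        _ ≤ C ^ (q-1) * ∑ j, m * |a k j| * |v j| ^ q := by
            refine mul_le_mul_of_nonneg_right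
              (Real.rpow_le_rpow hS0 (hrow k) hq1)
              (Finset.sum_nonneg fun j _ => by positivity)
  have step2 : ∑ k, m * |∑ j, m * a k j * v j| ^ q ≤ C ^ q * N := by
    calc ∑ k, m * |∑ j, m * a k j * v j| ^ q
        ≤ ∑ k, m * (C ^ (q-1) * ∑ j, m * |a k j| * |v j| ^ q) :=
          Finset.sum_le_sum fun k _ => mul_le_mul_of_nonneg_left (step1 k) hm.le
      _ = ∑ k, ∑ j, C ^ (q-1) * (m * |a k j| * (m * |v j| ^ q)) := by
          refine Finset.sum_congr rfl fun k _ => ?_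
          simp only [Finset.mul_sum]
          refine Finset.sum_congr rfl fun j _ => by ring
      _ = ∑ j, ∑ k, C ^ (q-1) * (m * |a k j| * (m * |v j| ^ q)) := Finset.sum_comm
      _ = C ^ (q-1) * ∑ j, (∑ k, m * |a k j|) * (m * |v j| ^ q) := by
          rw [Finset.mul_sum]
          refine Finset.sum_congr rfl fun j _ => ?_
          rw [Finset.sum_mul, Finset.mul_sum]
          try exact Finset.sum_congr rfl fun k _ => by ring
      _ ≤ C ^ (q-1) * ∑ j, C * (m * |v j| ^ q) := by
          refine mul_le_mul_of_nonneg_left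
            (Finset.sum_le_sum fun j _ => mul_le_mul_of_nonneg_right (hcol j) (by positivity))
            (Real.rpow_nonneg hC _)
      _ = C ^ (q-1) * (C * N) := by rw [← Finset.mul_sum]
      _ = C ^ q * N := by
          have hCq : C ^ (q - 1) * C = C ^ q := by
            nth_rewrite 2 [← Real.rpow_one C]
            rw [← Real.rpow_add' hC (by simpa using hq0)]
            norm_num
          rw [← hCq]; ring
  calc (∑ k, m * |∑ j, m * a k j * v j| ^ q) ^ (1/q)
      ≤ (C ^ q * N) ^ (1/q) := by
        refine Real.rpow_le_rpow (Finset.sum_nonneg fun k _ => by positivity) step2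
          (by positivity)
    _ = C * N ^ (1/q) := by
        rw [Real.mul_rpow (Real.rpow_nonneg hC _) hN0, ← Real.rpow_mul hC,
          mul_one_div_cancel hq0, Real.rpow_one]



section GridAux
variable (M : Fin d → ℕ) [∀ ℓ, NeZero (M ℓ)]

lemma Mpos (ℓ : Fin d) : (0:ℝ) < M ℓ := by
  exact_mod_cast Nat.pos_of_ne_zero (NeZero.ne (M ℓ))

lemma mK_pos : 0 < mK M := Finset.prod_pos fun ℓ _ => inv_pos.2 (Mpos M ℓ)

/-- The coordinate interval of a cell. -/
def Iv (m : ℕ) (a : ZMod m) : Set ℝ := Set.Ico ((a.val:ℝ)/m) (((a.val:ℝ)+1)/m)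

lemma Iv_subset (m : ℕ) [NeZero m] (a : ZMod m) : Iv m a ⊆ Set.Ico 0 1 := by
  have hm : (0:ℝ) < m := by exact_mod_cast Nat.pos_of_ne_zero (NeZero.ne m)
  have hv : (a.val : ℝ) + 1 ≤ m := by exact_mod_cast Nat.succ_le_of_lt (ZMod.val_lt a)
  intro x hx
  exact ⟨le_trans (by positivity) hx.1, lt_of_lt_of_le hx.2 (by rw [div_le_one hm]; exact hv)⟩

lemma Iv_meas (m : ℕ) (a : ZMod m) : MeasurableSet (Iv m a) := measurableSet_Ico

lemma QK_eq (K : Cell M) : QK M K = Set.univ.pi fun ℓ => cmk '' Iv (M ℓ) (K ℓ) := rfl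

lemma QK_measurable (K : Cell M) : MeasurableSet (QK M K) := by
  rw [QK_eq]
  exact MeasurableSet.univ_pi fun ℓ => measurableSet_image_cmk (Iv_subset _ _) (Iv_meas _ _)

lemma Iv_disjoint {m : ℕ} [NeZero m] {a b : ZMod m} (h : a ≠ b) :
    Disjoint (Iv m a) (Iv m b) := by
  have hm : (0:ℝ) < m := by exact_mod_cast Nat.pos_of_ne_zero (NeZero.ne m)
  have hv : a.val ≠ b.val := fun he => h (ZMod.val_injective m he)
  rw [Iv, Iv, Set.Ico_disjoint_Ico]
  rcases lt_or_gt_of_ne hv with hlt | hlt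
  · refine le_trans (min_le_left _ _) (le_trans ?_ (le_max_right _ _))
    rw [div_le_div_iff_of_pos_right hm]
    exact_mod_cast Nat.succ_le_of_lt hlt
  · refine le_trans (min_le_right _ _) (le_trans ?_ (le_max_left _ _))
    rw [div_le_div_iff_of_pos_right hm]
    exact_mod_cast Nat.succ_le_of_lt hlt

lemma QK_disjoint {K J : Cell M} (h : K ≠ J) : Disjoint (QK M K) (QK M J) := by
  obtain ⟨ℓ, hℓ⟩ := Function.ne_iff.1 h
  rw [QK_eq, QK_eq, Set.disjoint_left]
  intro x hx hx'
  have h1 := hx ℓ (Set.mem_univ ℓ)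
  have h2 := hx' ℓ (Set.mem_univ ℓ)
  exact Set.disjoint_left.1
    (disjoint_image_cmk (Iv_subset _ _) (Iv_subset _ _) (Iv_disjoint hℓ)) h1 h2

lemma QK_volume_le (K : Cell M) : volume (QK M K) ≤ ENNReal.ofReal (mK M) := by
  rw [QK_eq, volume_pi_pi]
  have h1 : ∀ ℓ, volume (cmk '' Iv (M ℓ) (K ℓ)) ≤ ENNReal.ofReal ((M ℓ : ℝ))⁻¹ := by
    intro ℓ
    refine (volume_image_cmk_le (Iv_subset _ _) (Iv_meas _ _)).trans ?_
    rw [Iv, Real.volume_Ico]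
    apply le_of_eq
    congr 1
    ring
  calc ∏ ℓ, volume (cmk '' Iv (M ℓ) (K ℓ)) ≤ ∏ ℓ, ENNReal.ofReal ((M ℓ : ℝ))⁻¹ :=
        Finset.prod_le_prod' fun ℓ _ => h1 ℓ
    _ = ENNReal.ofReal (mK M) := by
        rw [mK, ← ENNReal.ofReal_prod_of_nonneg]
        intro ℓ _; positivity


lemma measurePreserving_fst_Td :
    MeasurePreserving (Prod.fst : Td d × Td d → Td d)
      ((volume : Measure (Td d)).prod volume) volume :=
  ⟨measurable_fst, by rw [Measure.map_fst_prod]; simp⟩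

lemma integrable_shift_kernel {W : Td d → ℝ} (hW : Integrable W) :
    Integrable (fun z : Td d × Td d => W (z.1 - z.2))
      ((volume : Measure (Td d)).prod volume) := by
  have hmp : MeasurePreserving (fun z : Td d × Td d => (z.1 - z.2, z.2))
      (Measure.prod volume volume) (Measure.prod volume volume) :=
    measurePreserving_sub_prod volume volume
  have hcomp := (measurePreserving_fst_Td (d := d)).comp hmp
  exact ((MeasurePreserving.integrable_comp hcomp hW.aestronglyMeasurable).2 hW :)

lemma QK_vol_toReal (K : Cell M) : (volume (QK M K)).toReal ≤ mK M :=
  ENNReal.toReal_le_of_le_ofReal (mK_pos M).le (QK_volume_le M K)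

/-- Single-cell bound for the discrete kernel. -/
lemma Wdisc_abs_le (W : Td d → ℝ) (hW : Integrable W) (K J : Cell M) :
    |Wdisc M W K J| ≤ (mK M * mK M)⁻¹ *
      ∫ z in QK M K ×ˢ QK M J, |W (z.1 - z.2)| ∂((volume : Measure (Td d)).prod volume) := by
  set μ := (volume : Measure (Td d))
  have hg : Integrable (fun z : Td d × Td d => |W (z.1 - z.2)|) (μ.prod μ) :=
    (integrable_shift_kernel hW).abs
  have hgr : IntegrableOn (fun z : Td d × Td d => |W (z.1 - z.2)|) (QK M K ×ˢ QK M J) (μ.prod μ) :=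
    hg.integrableOn
  have hGint : Integrable (fun x => ∫ y in QK M J, |W (x - y)| ∂μ) (μ.restrict (QK M K)) := by
    have := hgr
    rw [IntegrableOn, ← Measure.prod_restrict] at this
    exact this.integral_prod_left
  have hmk := mK_pos M
  have hc : (0:ℝ) ≤ (mK M * mK M)⁻¹ := by positivity
  rw [Wdisc, abs_mul, abs_of_nonneg hc]
  apply mul_le_mul_of_nonneg_left _ hc
  calc |∫ x in QK M K, ∫ y in QK M J, W (x - y) ∂μ ∂μ|
      ≤ ∫ x in QK M K, ∫ y in QK M J, |W (x - y)| ∂μ ∂μ := by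
        have hbound : ∀ x : Td d, ‖∫ y in QK M J, W (x - y) ∂μ‖
            ≤ ∫ y in QK M J, |W (x - y)| ∂μ := by
          intro x
          have h1 := norm_integral_le_integral_norm (μ := μ.restrict (QK M J))
            (fun y => W (x - y))
          simpa [Real.norm_eq_abs] using h1
        rw [← Real.norm_eq_abs]
        exact norm_integral_le_of_norm_le hGint (Filter.Eventually.of_forall hbound)
    _ = ∫ z in QK M K ×ˢ QK M J, |W (z.1 - z.2)| ∂(μ.prod μ) :=
        (setIntegral_prod _ hgr).symm

/-- Row bound. -/
lemma Wdisc_row (W : Td d → ℝ) (hW : Integrable W) (K : Cell M) :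
    ∑ J : Cell M, mK M * |Wdisc M W K J| ≤ ∫ x, |W x| := by
  set μ := (volume : Measure (Td d))
  have hg : Integrable (fun z : Td d × Td d => |W (z.1 - z.2)|) (μ.prod μ) :=
    (integrable_shift_kernel hW).abs
  have hsum : ∑ J : Cell M, ∫ z in QK M K ×ˢ QK M J, |W (z.1 - z.2)| ∂(μ.prod μ)
      ≤ mK M * ∫ x, |W x| ∂μ := by
    have hun : ∫ z in ⋃ J ∈ (Finset.univ : Finset (Cell M)), QK M K ×ˢ QK M J,
        |W (z.1 - z.2)| ∂(μ.prod μ)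
        = ∑ J : Cell M, ∫ z in QK M K ×ˢ QK M J, |W (z.1 - z.2)| ∂(μ.prod μ) := by
      refine integral_biUnion_finset _ (fun J _ => ((QK_measurable M K).prod (QK_measurable M J)))
        ?_ (fun J _ => hg.integrableOn)
      intro J hJ J' hJ' hne
      have := QK_disjoint M hne
      rw [Function.onFun]
      exact Set.disjoint_left.2 fun z hz hz' =>
        Set.disjoint_left.1 this hz.2 hz'.2
    rw [← hun]
    have hsub : (⋃ J ∈ (Finset.univ : Finset (Cell M)), QK M K ×ˢ QK M J)
        ⊆ QK M K ×ˢ (Set.univ : Set (Td d)) := by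
      intro z hz
      simp only [Set.mem_iUnion] at hz
      obtain ⟨J, _, hz⟩ := hz
      exact ⟨hz.1, trivial⟩
    have hstep : ∫ z in ⋃ J ∈ (Finset.univ : Finset (Cell M)), QK M K ×ˢ QK M J,
        |W (z.1 - z.2)| ∂(μ.prod μ)
        ≤ ∫ z in QK M K ×ˢ (Set.univ : Set (Td d)), |W (z.1 - z.2)| ∂(μ.prod μ) := by
      refine setIntegral_mono_set hg.integrableOn
        (Filter.Eventually.of_forall fun z => abs_nonneg _) (HasSubset.Subset.eventuallyLE hsub)
    refine hstep.trans ?_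
    have hfub : ∫ z in QK M K ×ˢ (Set.univ : Set (Td d)), |W (z.1 - z.2)| ∂(μ.prod μ)
        = ∫ x in QK M K, ∫ y, |W (x - y)| ∂μ ∂μ := by
      rw [setIntegral_prod _ hg.integrableOn]
      simp [Measure.restrict_univ]
    rw [hfub]
    have hin : ∀ x : Td d, ∫ y, |W (x - y)| ∂μ = ∫ x, |W x| ∂μ := fun x =>
      integral_sub_left_eq_self (fun y => |W y|) μ x
    simp only [hin]
    rw [setIntegral_const]
    exact mul_le_mul_of_nonneg_right (QK_vol_toReal M K)
      (integral_nonneg fun x => abs_nonneg _)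
  calc ∑ J : Cell M, mK M * |Wdisc M W K J|
      ≤ ∑ J : Cell M, mK M * ((mK M * mK M)⁻¹ *
          ∫ z in QK M K ×ˢ QK M J, |W (z.1 - z.2)| ∂(μ.prod μ)) := by
        refine Finset.sum_le_sum fun J _ => ?_
        exact mul_le_mul_of_nonneg_left (Wdisc_abs_le M W hW K J) (mK_pos M).le
    _ = mK M * (mK M * mK M)⁻¹ *
          ∑ J : Cell M, ∫ z in QK M K ×ˢ QK M J, |W (z.1 - z.2)| ∂(μ.prod μ) := by
        rw [Finset.mul_sum]; ring_nf
    _ ≤ mK M * (mK M * mK M)⁻¹ * (mK M * ∫ x, |W x| ∂μ) := by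
        have hmk := mK_pos M
        refine mul_le_mul_of_nonneg_left hsum (by positivity)
    _ = ∫ x, |W x| ∂μ := by
        have h := (mK_pos M).ne'
        field_simp

/-- Column bound. -/
lemma Wdisc_col (W : Td d → ℝ) (hW : Integrable W) (J : Cell M) :
    ∑ K : Cell M, mK M * |Wdisc M W K J| ≤ ∫ x, |W x| := by
  set μ := (volume : Measure (Td d))
  have hg : Integrable (fun z : Td d × Td d => |W (z.1 - z.2)|) (μ.prod μ) :=
    (integrable_shift_kernel hW).abs
  have hsum : ∑ K : Cell M, ∫ z in QK M K ×ˢ QK M J, |W (z.1 - z.2)| ∂(μ.prod μ)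
      ≤ mK M * ∫ x, |W x| ∂μ := by
    have hun : ∫ z in ⋃ K ∈ (Finset.univ : Finset (Cell M)), QK M K ×ˢ QK M J,
        |W (z.1 - z.2)| ∂(μ.prod μ)
        = ∑ K : Cell M, ∫ z in QK M K ×ˢ QK M J, |W (z.1 - z.2)| ∂(μ.prod μ) := by
      refine integral_biUnion_finset _ (fun K _ => ((QK_measurable M K).prod (QK_measurable M J)))
        ?_ (fun K _ => hg.integrableOn)
      intro K hK K' hK' hne
      have := QK_disjoint M hne
      rw [Function.onFun]
      exact Set.disjoint_left.2 fun z hz hz' => Set.disjoint_left.1 this hz.1 hz'.1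
    rw [← hun]
    have hsub : (⋃ K ∈ (Finset.univ : Finset (Cell M)), QK M K ×ˢ QK M J)
        ⊆ (Set.univ : Set (Td d)) ×ˢ QK M J := by
      intro z hz
      simp only [Set.mem_iUnion] at hz
      obtain ⟨K, _, hz⟩ := hz
      exact ⟨trivial, hz.2⟩
    refine (setIntegral_mono_set hg.integrableOn
      (Filter.Eventually.of_forall fun z => abs_nonneg _)
      (HasSubset.Subset.eventuallyLE hsub)).trans ?_
    have hres : (μ.prod μ).restrict ((Set.univ : Set (Td d)) ×ˢ QK M J)
        = μ.prod (μ.restrict (QK M J)) := by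
      rw [← Measure.prod_restrict, Measure.restrict_univ]
    have hint : Integrable (fun z : Td d × Td d => |W (z.1 - z.2)|)
        (μ.prod (μ.restrict (QK M J))) := by
      rw [← hres]; exact hg.integrableOn
    calc ∫ z in (Set.univ : Set (Td d)) ×ˢ QK M J, |W (z.1 - z.2)| ∂(μ.prod μ)
        = ∫ z, |W (z.1 - z.2)| ∂(μ.prod (μ.restrict (QK M J))) := by rw [← hres]
      _ = ∫ y, (∫ x, |W (x - y)| ∂μ) ∂(μ.restrict (QK M J)) :=
          integral_prod_symm _ hint
      _ = ∫ y in QK M J, (∫ x, |W x| ∂μ) ∂μ := by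
          congr 1
          ext y
          exact integral_sub_right_eq_self (fun x => |W x|) y
      _ ≤ mK M * ∫ x, |W x| ∂μ := by
          rw [setIntegral_const]
          exact mul_le_mul_of_nonneg_right (QK_vol_toReal M J)
            (integral_nonneg fun x => abs_nonneg _)
  calc ∑ K : Cell M, mK M * |Wdisc M W K J|
      ≤ ∑ K : Cell M, mK M * ((mK M * mK M)⁻¹ *
          ∫ z in QK M K ×ˢ QK M J, |W (z.1 - z.2)| ∂(μ.prod μ)) := by
        refine Finset.sum_le_sum fun K _ => ?_
        exact mul_le_mul_of_nonneg_left (Wdisc_abs_le M W hW K J) (mK_pos M).le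
    _ = mK M * (mK M * mK M)⁻¹ *
          ∑ K : Cell M, ∫ z in QK M K ×ˢ QK M J, |W (z.1 - z.2)| ∂(μ.prod μ) := by
        rw [Finset.mul_sum]; ring_nf
    _ ≤ mK M * (mK M * mK M)⁻¹ * (mK M * ∫ x, |W x| ∂μ) := by
        have hmk := mK_pos M
        refine mul_le_mul_of_nonneg_left hsum (by positivity)
    _ = ∫ x, |W x| ∂μ := by
        have h := (mK_pos M).ne'
        field_simp


lemma cmk_add (s t : ℝ) : cmk (s + t) = cmk s + cmk t := rfl

lemma cmk_intCast (n : ℤ) : cmk (n : ℝ) = 0 := by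
  refine (QuotientAddGroup.eq_zero_iff _).2 ?_
  have : (n : ℝ) = n • (1:ℝ) := by simp
  rw [this]
  exact AddSubgroup.zsmul_mem_zmultiples _ n

lemma image_cmk_shift_int (x y : ℝ) (n : ℤ) :
    cmk '' Set.Ico (x + n) (y + n) = cmk '' Set.Ico x y := by
  rw [← Set.image_add_const_Ico, Set.image_image]
  apply Set.image_congr
  intro t _
  rw [cmk_add, cmk_intCast, add_zero]

lemma image_add_cmk (S : Set ℝ) (c : ℝ) :
    (fun z => z + cmk c) '' (cmk '' S) = cmk '' ((fun t => t + c) '' S) := by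
  rw [Set.image_image, Set.image_image]
  apply Set.image_congr
  intro t _
  rw [cmk_add]

lemma Iv_image_shift (m : ℕ) [NeZero m] (a : ZMod m) :
    cmk '' Iv m (a + 1) = (fun z => z + cmk ((m:ℝ)⁻¹)) '' (cmk '' Iv m a) := by
  have hm0 : (m:ℝ) ≠ 0 := Nat.cast_ne_zero.2 (NeZero.ne m)
  rw [image_add_cmk, Iv, Iv, Set.image_add_const_Ico]
  set c : ℕ := (a.val + 1) / m with hc
  have hval : (a + 1).val + m * c = a.val + 1 := by
    have h1 : (a + 1).val = (a.val + 1) % m := by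
      rw [ZMod.val_add, ZMod.val_one_eq_one_mod]
      conv_rhs => rw [Nat.add_mod]
      rw [Nat.mod_eq_of_lt (ZMod.val_lt a)]
    rw [h1, hc, Nat.mod_add_div]
  have hvalR : ((a + 1).val : ℝ) = (a.val : ℝ) + 1 - m * c := by
    have := congrArg (fun k : ℕ => (k : ℝ)) hval
    push_cast at this
    linarith
  have e1 : (((a+1).val:ℝ))/m = ((a.val:ℝ)/m + (m:ℝ)⁻¹) + (((-(c:ℤ)):ℤ):ℝ) := by
    rw [hvalR]; push_cast; field_simp; try ring
  have e2 : ((((a+1).val:ℝ))+1)/m = (((a.val:ℝ)+1)/m + (m:ℝ)⁻¹) + (((-(c:ℤ)):ℤ):ℝ) := by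
    rw [hvalR]; push_cast; field_simp; try ring
  rw [e1, e2, image_cmk_shift_int]

noncomputable def ev (M : Fin d → ℕ) (ℓ : Fin d) : Td d := fun m => if m = ℓ then cmk ((M ℓ:ℝ)⁻¹) else 0

lemma QK_shift (K : Cell M) (ℓ : Fin d) :
    QK M (shift M K ℓ 1) = (fun x => x + ev M ℓ) '' QK M K := by
  have himg : ∀ x : Td d, x ∈ (fun y : Td d => y + ev M ℓ) '' QK M K ↔ x - ev M ℓ ∈ QK M K := by
    intro x
    constructor
    · rintro ⟨y, hy, rfl⟩; simpa using hy
    · intro h; exact ⟨x - ev M ℓ, h, by simp⟩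
  ext x
  rw [himg, QK_eq, QK_eq, Set.mem_univ_pi, Set.mem_univ_pi]
  apply forall_congr'
  intro m
  by_cases h : m = ℓ
  · subst h
    have hshift : shift M K m 1 m = K m + 1 := by
      simp [shift, Function.update_self]
    have hev : ev M m m = cmk ((M m : ℝ)⁻¹) := by simp [ev]
    have hxm : (x - ev M m) m = x m - cmk ((M m:ℝ)⁻¹) := by simp [ev]
    rw [hshift, Iv_image_shift, hxm]
    constructor
    · rintro ⟨y, hy, hxy⟩
      have hy' : x m - cmk ((M m:ℝ)⁻¹) = y := by
        rw [← hxy, add_sub_cancel_right]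
      rw [hy']; exact hy
    · intro h
      exact ⟨x m - cmk ((M m:ℝ)⁻¹), h, by simp⟩
  · have hshift : shift M K ℓ 1 m = K m := by simp [shift, Function.update_of_ne h]
    have hev : ev M ℓ m = 0 := by simp [ev, h]
    rw [hshift, Pi.sub_apply, hev, sub_zero]

lemma setIntegral_add_right (f : Td d → ℝ) (v : Td d) (s : Set (Td d)) :
    ∫ x in (fun x => x + v) '' s, f x = ∫ x in s, f (x + v) :=
  (measurePreserving_add_right volume v).setIntegral_image_emb
    (measurableEmbedding_addRight v) f s

lemma Wdisc_shift (W : Td d → ℝ) (K J : Cell M) (ℓ : Fin d) :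
    Wdisc M W (shift M K ℓ 1) (shift M J ℓ 1) = Wdisc M W K J := by
  rw [Wdisc, Wdisc, QK_shift M K ℓ, QK_shift M J ℓ, setIntegral_add_right]
  congr 1
  simp_rw [setIntegral_add_right, add_sub_add_right_eq_sub]

lemma shift_cancel (K : Cell M) (ℓ : Fin d) (s : ℤ) :
    shift M (shift M K ℓ s) ℓ (-s) = K := by
  funext m
  by_cases h : m = ℓ
  · subst h
    simp [shift, Function.update_self]
  · simp [shift, Function.update_of_ne h]

lemma shift_bijective (ℓ : Fin d) (s : ℤ) :
    Function.Bijective (fun K : Cell M => shift M K ℓ s) := by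
  refine Function.bijective_iff_has_inverse.2 ⟨fun K => shift M K ℓ (-s), ?_, ?_⟩
  · intro K; exact shift_cancel M K ℓ s
  · intro K
    have := shift_cancel M K ℓ (-s)
    simpa using this

lemma sum_shift (f : Cell M → ℝ) (ℓ : Fin d) :
    ∑ K : Cell M, f (shift M K ℓ 1) = ∑ K : Cell M, f K :=
  Fintype.sum_bijective _ (shift_bijective M ℓ 1) _ _ fun _ => rfl


end GridAux
end Aux

/-- discrete `L^q` bounds for the nonlocal potential and its
differences. -/
theorem potential_discrete_norm_bounds {d n : ℕ} (M : Fin d → ℕ) [∀ ℓ, NeZero (M ℓ)]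
    (W : Fin n → Fin n → Td d → ℝ)
    (hW : ∀ i j, MeasureTheory.Integrable (W i j))
    (q : ℝ) (hq : 1 ≤ q)
    (u : Fin n → Cell M → ℝ) (i : Fin n) :
    normq M q (pot M (fun i j => Wdisc M (W i j)) u i)
      ≤ (∑ j, (∫ x : Td d, |W i j x|) * normq M q (u j)) ∧
    ∀ ℓ : Fin d,
      (∑ K : Cell M, mK M *
          |pot M (fun i j => Wdisc M (W i j)) u i (shift M K ℓ 1)
            - pot M (fun i j => Wdisc M (W i j)) u i K| ^ q) ^ (1/q)
        ≤ ∑ j, (∫ x : Td d, |W i j x|) *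
            (∑ K : Cell M, mK M * |u j (shift M K ℓ 1) - u j K| ^ q) ^ (1/q) := by
  classical
  have hq0 : q ≠ 0 := by positivity
  have hCpos : ∀ j : Fin n, 0 ≤ ∫ x : Td d, |W i j x| :=
    fun j => integral_nonneg fun x => abs_nonneg _
  have master : ∀ v : Fin n → Cell M → ℝ,
      (∑ K : Cell M, mK M * |∑ j, ∑ J : Cell M, mK M * Wdisc M (W i j) K J * v j J| ^ q) ^ (1/q)
      ≤ ∑ j, (∫ x : Td d, |W i j x|) * (∑ K : Cell M, mK M * |v j K| ^ q) ^ (1/q) := by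
    intro v
    calc (∑ K : Cell M, mK M *
            |∑ j, ∑ J : Cell M, mK M * Wdisc M (W i j) K J * v j J| ^ q) ^ (1/q)
        ≤ ∑ j, (∑ K : Cell M,
            mK M * |∑ J : Cell M, mK M * Wdisc M (W i j) K J * v j J| ^ q) ^ (1/q) :=
          minkowski_sum (fun _ : Cell M => mK M) (fun _ => (mK_pos M).le) Finset.univ
            (fun j K => ∑ J : Cell M, mK M * Wdisc M (W i j) K J * v j J) hq
      _ ≤ ∑ j, (∫ x : Td d, |W i j x|) * (∑ K : Cell M, mK M * |v j K| ^ q) ^ (1/q) :=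
          Finset.sum_le_sum fun j _ =>
            young (mK_pos M) (Wdisc M (W i j)) (v j) (hCpos j)
              (Wdisc_row M (W i j) (hW i j)) (Wdisc_col M (W i j) (hW i j)) hq
  constructor
  · simpa [normq, pot] using master u
  · intro ℓ
    have hdiff : ∀ K : Cell M,
        pot M (fun i j => Wdisc M (W i j)) u i (shift M K ℓ 1)
          - pot M (fun i j => Wdisc M (W i j)) u i K
        = ∑ j, ∑ J : Cell M, mK M * Wdisc M (W i j) K J * (u j (shift M J ℓ 1) - u j J) := by
      intro K
      rw [pot, pot, ← Finset.sum_sub_distrib]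
      refine Finset.sum_congr rfl fun j _ => ?_
      have hre : ∑ J : Cell M, mK M * Wdisc M (W i j) (shift M K ℓ 1) J * u j J
          = ∑ J : Cell M, mK M * Wdisc M (W i j) K J * u j (shift M J ℓ 1) := by
        rw [← sum_shift M (fun J => mK M * Wdisc M (W i j) (shift M K ℓ 1) J * u j J) ℓ]
        refine Finset.sum_congr rfl fun J _ => ?_
        rw [Wdisc_shift]
      rw [hre, ← Finset.sum_sub_distrib]
      refine Finset.sum_congr rfl fun J _ => by ring
    have hm := master (fun j K => u j (shift M K ℓ 1) - u j K)
    calc (∑ K : Cell M, mK M *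
            |pot M (fun i j => Wdisc M (W i j)) u i (shift M K ℓ 1)
              - pot M (fun i j => Wdisc M (W i j)) u i K| ^ q) ^ (1/q)
        = (∑ K : Cell M, mK M *
            |∑ j, ∑ J : Cell M,
              mK M * Wdisc M (W i j) K J * (u j (shift M J ℓ 1) - u j J)| ^ q) ^ (1/q) := by
          congr 1
          exact Finset.sum_congr rfl fun K _ => by rw [hdiff K]
      _ ≤ ∑ j, (∫ x : Td d, |W i j x|) *
            (∑ K : Cell M, mK M * |u j (shift M K ℓ 1) - u j K| ^ q) ^ (1/q) := hm

end SG
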